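/- For fixed b ∈ (0,1), the function G_b(x) = B(x,b) - 1/x admits the representation G_b(x) = ∫₀¹ t^{x-1}((1-t)^{b-1} - 1) dt for x > 0, and is strictly completely monotonic on (0, ∞); moreover lim_{x→∞} G_b(x) = 0 and lim_{x→0⁺} G_b(x) = -γ - ψ(b). -/

import Mathlib

/-- The digamma function ψ = Γ'/Γ, as the derivative of log ∘ Γ. -/
noncomputable def digamma (x : ℝ) : ℝ := deriv (fun y => Real.log (Real.Gamma y)) x

/-- The Euler–Mascheroni constant γ = -ψ(1). -/
noncomputable def eulerGamma : ℝ := -digamma 1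

open MeasureTheory Real Set Filter intervalIntegral

namespace Stmt11

noncomputable def g (b t : ℝ) : ℝ := (1 - t) ^ (b - 1) - 1

lemma g_nonneg {b : ℝ} (hb : b ∈ Set.Ioo (0:ℝ) 1) {t : ℝ} (ht : t ∈ Set.Ioo (0:ℝ) 1) :
    0 ≤ g b t := by
  have h1 : (0:ℝ) < 1 - t := by linarith [ht.2]
  have : 1 < (1 - t) ^ (b - 1) := by
    rw [Real.one_lt_rpow_iff_of_pos h1]
    exact Or.inr ⟨by linarith [ht.1], by linarith [hb.2]⟩
  simp only [g]; linarith

lemma g_pos {b : ℝ} (hb : b ∈ Set.Ioo (0:ℝ) 1) {t : ℝ} (ht : t ∈ Set.Ioo (0:ℝ) 1) :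
    0 < g b t := by
  have h1 : (0:ℝ) < 1 - t := by linarith [ht.2]
  have : 1 < (1 - t) ^ (b - 1) := by
    rw [Real.one_lt_rpow_iff_of_pos h1]
    exact Or.inr ⟨by linarith [ht.1], by linarith [hb.2]⟩
  simp only [g]; linarith

/-- Real Beta integrand integrability (from the complex version). -/
lemma intervalIntegrable_beta {x b : ℝ} (hx : 0 < x) (hb : 0 < b) (hb1 : b ≠ 1) :
    IntervalIntegrable (fun t => t ^ (x - 1) * (1 - t) ^ (b - 1)) volume 0 1 := by
  have h := (Complex.betaIntegral_convergent (u := (x:ℂ)) (v := (b:ℂ))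
      (by simpa using hx) (by simpa using hb)).norm
  rw [intervalIntegrable_iff_integrableOn_Ioc_of_le (by norm_num)] at h ⊢
  refine h.congr_fun (fun t ht => ?_) measurableSet_Ioc
  have ht0 : (0:ℝ) < t := ht.1
  have ht1 : t ≤ 1 := ht.2
  have h1 : ‖(t:ℂ) ^ ((x:ℂ) - 1)‖ = t ^ (x - 1) := by
    rw [Complex.norm_cpow_eq_rpow_re_of_pos ht0]
    norm_num
  have h2 : ‖(1 - (t:ℂ)) ^ ((b:ℂ) - 1)‖ = (1 - t) ^ (b - 1) := by
    have he : (1 - (t:ℂ)) = ((1 - t : ℝ) : ℂ) := by push_cast; ring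
    have hre : (((b:ℂ) - 1)).re ≠ 0 := by
      simp only [Complex.sub_re, Complex.ofReal_re, Complex.one_re]
      exact sub_ne_zero.mpr hb1
    rw [he, Complex.norm_cpow_eq_rpow_re_of_nonneg (by linarith) hre]
    norm_num
  beta_reduce; rw [norm_mul, h1, h2]

/-- Real version of the Gamma–Beta relation. -/
lemma Gamma_mul_Gamma {x b : ℝ} (hx : 0 < x) (hb : 0 < b) :
    Real.Gamma x * Real.Gamma b
      = Real.Gamma (x + b) * ∫ t in (0:ℝ)..1, t ^ (x - 1) * (1 - t) ^ (b - 1) := by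
  have h := Complex.Gamma_mul_Gamma_eq_betaIntegral (s := (x:ℂ)) (t := (b:ℂ))
      (by simpa using hx) (by simpa using hb)
  have hI : Complex.betaIntegral (x:ℂ) (b:ℂ)
      = ((∫ t in (0:ℝ)..1, t ^ (x - 1) * (1 - t) ^ (b - 1) : ℝ) : ℂ) := by
    rw [Complex.betaIntegral, ← intervalIntegral.integral_ofReal]
    refine intervalIntegral.integral_congr (fun t ht => ?_)
    rw [Set.uIcc_of_le (by norm_num : (0:ℝ) ≤ 1)] at ht
    have h1 : (t:ℂ) ^ ((x:ℂ) - 1) = ((t ^ (x - 1) : ℝ) : ℂ) := by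
      rw [Complex.ofReal_cpow ht.1]; push_cast; ring_nf
    have h2 : (1 - (t:ℂ)) ^ ((b:ℂ) - 1) = (((1 - t) ^ (b - 1) : ℝ) : ℂ) := by
      rw [show (1 - (t:ℂ)) = ((1 - t : ℝ) : ℂ) by push_cast; ring,
        Complex.ofReal_cpow (by linarith [ht.2])]
      push_cast; ring_nf
    rw [h1, h2]; push_cast; ring
  rw [hI, Complex.Gamma_ofReal, Complex.Gamma_ofReal, ← Complex.ofReal_add,
    Complex.Gamma_ofReal, ← Complex.ofReal_mul, ← Complex.ofReal_mul] at h
  exact_mod_cast h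

/-- Part 1: the integral representation. -/
lemma part1 {b : ℝ} (hb : b ∈ Set.Ioo (0:ℝ) 1) {x : ℝ} (hx : 0 < x) :
    Real.Gamma x * Real.Gamma b / Real.Gamma (x + b) - 1 / x
      = ∫ t in (0:ℝ)..1, t ^ (x - 1) * ((1 - t) ^ (b - 1) - 1) := by
  have hG : (0:ℝ) < Real.Gamma (x + b) := Real.Gamma_pos_of_pos (by linarith [hb.1])
  have hrpow : IntervalIntegrable (fun t : ℝ => t ^ (x - 1)) volume 0 1 :=
    intervalIntegral.intervalIntegrable_rpow' (by linarith)
  have hbeta := intervalIntegrable_beta hx hb.1 hb.2.ne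
  have hsub : (∫ t in (0:ℝ)..1, t ^ (x - 1) * ((1 - t) ^ (b - 1) - 1))
      = (∫ t in (0:ℝ)..1, t ^ (x - 1) * (1 - t) ^ (b - 1)) - ∫ t in (0:ℝ)..1, t ^ (x - 1) := by
    rw [← intervalIntegral.integral_sub hbeta hrpow]
    refine intervalIntegral.integral_congr (fun t ht => ?_)
    ring
  have hone : (∫ t in (0:ℝ)..1, t ^ (x - 1)) = 1 / x := by
    rw [integral_rpow (Or.inl (by linarith : (-1:ℝ) < x - 1))]
    rw [Real.zero_rpow (by linarith : x - 1 + 1 ≠ 0), Real.one_rpow]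
    rw [sub_add_cancel]; field_simp; norm_num
  have hbi : (∫ t in (0:ℝ)..1, t ^ (x - 1) * (1 - t) ^ (b - 1))
      = Real.Gamma x * Real.Gamma b / Real.Gamma (x + b) := by
    field_simp
    linarith [Gamma_mul_Gamma hx hb.1]
  rw [hsub, hone, hbi]

lemma contOn_aux {b x : ℝ} : ContinuousOn (fun t : ℝ => t ^ (x - 1) * g b t) (Set.Ioo (0:ℝ) 1) := by
  intro t ht
  apply ContinuousAt.continuousWithinAt
  have h2 : ContinuousAt (fun t : ℝ => t ^ (x - 1)) t :=
    Real.continuousAt_rpow_const t _ (Or.inl ht.1.ne')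
  have h3 : ContinuousAt (fun t : ℝ => (1 - t) ^ (b - 1)) t := by
    have : ContinuousAt (fun t : ℝ => (1:ℝ) - t) t :=
      (continuous_const.sub continuous_id).continuousAt
    exact (Real.continuousAt_rpow_const (1 - t) _
      (Or.inl (by have h2 := ht.2; intro h; rw [sub_eq_zero] at h; linarith))).comp this
  exact h2.mul ((h3.sub continuousAt_const))

lemma contOn_log {b x : ℝ} (n : ℕ) :
    ContinuousOn (fun t : ℝ => (Real.log t) ^ n * (t ^ (x - 1) * g b t)) (Set.Ioo (0:ℝ) 1) := by
  refine ContinuousOn.mul ?_ contOn_aux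
  intro t ht
  exact (((Real.continuousAt_log ht.1.ne').pow n)).continuousWithinAt

lemma measurable_core {b x : ℝ} (n : ℕ) :
    AEStronglyMeasurable (fun t : ℝ => |Real.log t| ^ n * (t ^ (x - 1) * g b t))
      (volume.restrict (Set.Ioo (0:ℝ) 1)) := by
  refine ContinuousOn.aestronglyMeasurable ?_ measurableSet_Ioo
  refine ContinuousOn.mul ?_ contOn_aux
  intro t ht
  exact (((Real.continuousAt_log ht.1.ne').abs.pow n)).continuousWithinAt

lemma measurable_core' {b x : ℝ} (n : ℕ) :
    AEStronglyMeasurable (fun t : ℝ => (Real.log t) ^ n * (t ^ (x - 1) * g b t))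
      (volume.restrict (Set.Ioo (0:ℝ) 1)) :=
  (contOn_log n).aestronglyMeasurable measurableSet_Ioo

/-- Key pointwise bound killing the logarithm. -/
lemma log_pow_bound {x : ℝ} (hx : 0 < x) (n : ℕ) {t : ℝ} (ht : t ∈ Set.Ioo (0:ℝ) 1) :
    |Real.log t| ^ n * t ^ (x - 1) ≤ (n.factorial * (2 / x) ^ n) * t ^ (x / 2 - 1) := by
  have ht0 := ht.1
  have hlt : Real.log t < 0 := Real.log_neg ht0 ht.2
  set u : ℝ := -Real.log t with hu
  have hu0 : 0 ≤ u := by simp [hu]; linarith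
  have habs : |Real.log t| = u := by rw [abs_of_neg hlt]
  have hsplit : t ^ (x - 1) = t ^ (x / 2) * t ^ (x / 2 - 1) := by
    rw [← Real.rpow_add ht0]; ring_nf
  have hexp : t ^ (x / 2) = Real.exp (-(x / 2 * u)) := by
    rw [Real.rpow_def_of_pos ht0, hu]; ring_nf
  have hkey : u ^ n * Real.exp (-(x / 2 * u)) ≤ n.factorial * (2 / x) ^ n := by
    have h1 : (x / 2 * u) ^ n / n.factorial ≤ Real.exp (x / 2 * u) :=
      Real.pow_div_factorial_le_exp (x := x / 2 * u) (by positivity) n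
    have h2 : (x / 2 * u) ^ n ≤ n.factorial * Real.exp (x / 2 * u) := by
      rw [div_le_iff₀ (by positivity : (0:ℝ) < (n.factorial:ℝ))] at h1
      linarith
    have h3 : (x / 2) ^ n * u ^ n ≤ n.factorial * Real.exp (x / 2 * u) := by
      rw [← mul_pow]; exact h2
    have h4 : u ^ n ≤ n.factorial * (2 / x) ^ n * Real.exp (x / 2 * u) := by
      have hxp : (0:ℝ) < (x / 2) ^ n := by positivity
      have := mul_le_mul_of_nonneg_left h3 (le_of_lt (by positivity : (0:ℝ) < (2 / x) ^ n))
      calc u ^ n = (2 / x) ^ n * ((x / 2) ^ n * u ^ n) := by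
            rw [← mul_assoc, ← mul_pow]
            field_simp
            rw [one_pow, mul_one]
        _ ≤ (2 / x) ^ n * (n.factorial * Real.exp (x / 2 * u)) := this
        _ = n.factorial * (2 / x) ^ n * Real.exp (x / 2 * u) := by ring
    calc u ^ n * Real.exp (-(x / 2 * u))
        ≤ (n.factorial * (2 / x) ^ n * Real.exp (x / 2 * u)) * Real.exp (-(x / 2 * u)) :=
          mul_le_mul_of_nonneg_right h4 (Real.exp_nonneg _)
      _ = n.factorial * (2 / x) ^ n := by rw [mul_assoc, ← Real.exp_add]; simp
  calc |Real.log t| ^ n * t ^ (x - 1)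
      = (u ^ n * Real.exp (-(x / 2 * u))) * t ^ (x / 2 - 1) := by
        rw [habs, hsplit, ← hexp]; ring
    _ ≤ (n.factorial * (2 / x) ^ n) * t ^ (x / 2 - 1) :=
        mul_le_mul_of_nonneg_right hkey (Real.rpow_nonneg ht0.le _)

lemma integrable_abs {b x : ℝ} (hb : b ∈ Set.Ioo (0:ℝ) 1) (hx : 0 < x) (n : ℕ) :
    IntegrableOn (fun t => |Real.log t| ^ n * (t ^ (x - 1) * g b t)) (Set.Ioo (0:ℝ) 1) := by
  have hbase : IntegrableOn (fun t => t ^ (x / 2 - 1) * (1 - t) ^ (b - 1)) (Set.Ioo (0:ℝ) 1) := by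
    have := (intervalIntegrable_beta (x := x / 2) (by linarith) hb.1 hb.2.ne)
    rw [intervalIntegrable_iff_integrableOn_Ioc_of_le (by norm_num)] at this
    exact this.mono_set Set.Ioo_subset_Ioc_self
  set C : ℝ := n.factorial * (2 / x) ^ n with hC
  refine (hbase.const_mul C).mono' (measurable_core n) ?_
  rw [ae_restrict_iff' measurableSet_Ioo]
  refine ae_of_all _ (fun t ht => ?_)
  have ht0 := ht.1
  have hgn := g_nonneg hb ht
  have h1 : ‖|Real.log t| ^ n * (t ^ (x - 1) * g b t)‖
      = (|Real.log t| ^ n * t ^ (x - 1)) * g b t := by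
    rw [Real.norm_eq_abs, abs_of_nonneg (by positivity), mul_assoc]
  have h2 : g b t ≤ (1 - t) ^ (b - 1) := by simp only [g]; linarith
  rw [h1]
  calc (|Real.log t| ^ n * t ^ (x - 1)) * g b t
      ≤ (C * t ^ (x / 2 - 1)) * (1 - t) ^ (b - 1) := by
        apply mul_le_mul (log_pow_bound hx n ht) h2 hgn
        positivity
    _ = C * (t ^ (x / 2 - 1) * (1 - t) ^ (b - 1)) := by ring

lemma integrableF {b x : ℝ} (hb : b ∈ Set.Ioo (0:ℝ) 1) (hx : 0 < x) (n : ℕ) :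
    IntegrableOn (fun t => (Real.log t) ^ n * (t ^ (x - 1) * g b t)) (Set.Ioo (0:ℝ) 1) := by
  refine (integrable_abs hb hx n).mono' (measurable_core' n) ?_
  rw [ae_restrict_iff' measurableSet_Ioo]
  refine ae_of_all _ (fun t ht => ?_)
  have hgn := g_nonneg hb ht
  have hp : (0:ℝ) ≤ t ^ (x - 1) * g b t := by
    have := Real.rpow_nonneg ht.1.le (x - 1); positivity
  rw [Real.norm_eq_abs, abs_mul, abs_pow, abs_of_nonneg hp]

noncomputable def F (b : ℝ) (n : ℕ) (x : ℝ) : ℝ :=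
  ∫ t in Set.Ioo (0:ℝ) 1, (Real.log t) ^ n * (t ^ (x - 1) * g b t)

set_option maxHeartbeats 1000000 in
lemma hasDerivAt_F {b : ℝ} (hb : b ∈ Set.Ioo (0:ℝ) 1) (n : ℕ) {x : ℝ} (hx : 0 < x) :
    HasDerivAt (F b n) (F b (n + 1) x) x := by
  have key := _root_.hasDerivAt_integral_of_dominated_loc_of_deriv_le
    (μ := volume.restrict (Set.Ioo (0:ℝ) 1))
    (F := fun y t => (Real.log t) ^ n * (t ^ (y - 1) * g b t))
    (F' := fun y t => (Real.log t) ^ (n + 1) * (t ^ (y - 1) * g b t))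
    (x₀ := x) (s := Metric.ball x (x / 2))
    (bound := fun t => |Real.log t| ^ (n + 1) * (t ^ (x / 2 - 1) * g b t))
    (Metric.ball_mem_nhds x (half_pos hx)) ?_ ?_ ?_ ?_ ?_ ?_
  · exact key.2
  · exact Filter.Eventually.of_forall (fun y => measurable_core' n)
  · exact integrableF hb hx n
  · exact measurable_core' (n + 1)
  · rw [ae_restrict_iff' measurableSet_Ioo]
    refine ae_of_all _ (fun t ht y hy => ?_)
    rw [Metric.mem_ball, Real.dist_eq, abs_sub_lt_iff] at hy
    have hyx : x / 2 - 1 ≤ y - 1 := by linarith [hy.2]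
    have h1 : t ^ (y - 1) ≤ t ^ (x / 2 - 1) :=
      Real.rpow_le_rpow_of_exponent_ge ht.1 ht.2.le hyx
    have hgn := g_nonneg hb ht
    have hn1 : ‖(Real.log t) ^ (n + 1) * (t ^ (y - 1) * g b t)‖
        = |Real.log t| ^ (n + 1) * (t ^ (y - 1) * g b t) := by
      rw [Real.norm_eq_abs, abs_mul, abs_pow]
      congr 1
      rw [abs_of_nonneg (mul_nonneg (Real.rpow_nonneg ht.1.le _) hgn)]
    rw [hn1]
    have := Real.rpow_nonneg ht.1.le (y - 1)
    refine mul_le_mul_of_nonneg_left ?_ (by positivity)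
    exact mul_le_mul_of_nonneg_right h1 hgn
  · exact integrable_abs hb (half_pos hx) (n + 1)
  · rw [ae_restrict_iff' measurableSet_Ioo]
    refine ae_of_all _ (fun t ht y _ => ?_)
    have h0 : HasDerivAt (fun y : ℝ => t ^ (y - 1)) (t ^ (y - 1) * Real.log t) y := by
      have h := HasDerivAt.rpow (hasDerivAt_const y t)
        ((hasDerivAt_id y).sub_const 1) (by exact ht.1)
      simpa using h
    have h2 := (h0.mul_const (g b t)).const_mul ((Real.log t) ^ n)
    convert h2 using 1
    · rfl
    ring

lemma eqG {b : ℝ} (hb : b ∈ Set.Ioo (0:ℝ) 1) {x : ℝ} (hx : 0 < x) :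
    Real.Gamma x * Real.Gamma b / Real.Gamma (x + b) - 1 / x = F b 0 x := by
  rw [part1 hb hx, F, intervalIntegral.integral_of_le (by norm_num : (0:ℝ) ≤ 1),
    MeasureTheory.integral_Ioc_eq_integral_Ioo]
  simp only [pow_zero, one_mul, g]

lemma iteratedG {b : ℝ} (hb : b ∈ Set.Ioo (0:ℝ) 1) (n : ℕ) :
    ∀ x : ℝ, 0 < x → iteratedDeriv n
      (fun y => Real.Gamma y * Real.Gamma b / Real.Gamma (y + b) - 1 / y) x = F b n x := by
  induction n with
  | zero => intro x hx; rw [iteratedDeriv_zero]; exact eqG hb hx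
  | succ n ih =>
    intro x hx
    rw [iteratedDeriv_succ]
    have hev : iteratedDeriv n
        (fun y => Real.Gamma y * Real.Gamma b / Real.Gamma (y + b) - 1 / y) =ᶠ[nhds x] F b n := by
      filter_upwards [Ioi_mem_nhds hx] with y hy
      exact ih y hy
    rw [hev.deriv_eq]
    exact (hasDerivAt_F hb n hx).deriv

lemma part2 {b : ℝ} (hb : b ∈ Set.Ioo (0:ℝ) 1) (n : ℕ) {x : ℝ} (hx : 0 < x) :
    0 < (-1) ^ n * F b n x := by
  have hq : (-1:ℝ) ^ n * F b n x
      = ∫ t in Set.Ioo (0:ℝ) 1, (-1:ℝ) ^ n * ((Real.log t) ^ n * (t ^ (x - 1) * g b t)) := by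
    rw [F, MeasureTheory.integral_const_mul]
  rw [hq]
  have hpos : ∀ t ∈ Set.Ioo (0:ℝ) 1,
      0 < (-1:ℝ) ^ n * ((Real.log t) ^ n * (t ^ (x - 1) * g b t)) := by
    intro t ht
    have e : (-Real.log t) ^ n * (t ^ (x - 1) * g b t)
        = (-1:ℝ) ^ n * ((Real.log t) ^ n * (t ^ (x - 1) * g b t)) := by
      rw [neg_pow]; ring
    rw [← e]
    have h1 : 0 < -Real.log t := by
      have := Real.log_neg ht.1 ht.2; linarith
    have h2 : 0 < t ^ (x - 1) := Real.rpow_pos_of_pos ht.1 _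
    have h3 := g_pos hb ht
    positivity
  have hint : IntegrableOn
      (fun t => (-1:ℝ) ^ n * ((Real.log t) ^ n * (t ^ (x - 1) * g b t)))
      (Set.Ioo (0:ℝ) 1) := (integrableF hb hx n).const_mul _
  have hnn : 0 ≤ᵐ[volume.restrict (Set.Ioo (0:ℝ) 1)]
      (fun t => (-1:ℝ) ^ n * ((Real.log t) ^ n * (t ^ (x - 1) * g b t))) := by
    rw [EventuallyLE, ae_restrict_iff' measurableSet_Ioo]
    exact ae_of_all _ (fun t ht => (hpos t ht).le)
  refine (MeasureTheory.setIntegral_pos_iff_support_of_nonneg_ae hnn hint).2 ?_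
  have hsub : Set.Ioo (0:ℝ) 1 ⊆ Function.support
      (fun t => (-1:ℝ) ^ n * ((Real.log t) ^ n * (t ^ (x - 1) * g b t))) ∩ Set.Ioo (0:ℝ) 1 :=
    fun t ht => ⟨(hpos t ht).ne', ht⟩
  calc (0:ENNReal) < volume (Set.Ioo (0:ℝ) 1) := by simp [Real.volume_Ioo]
    _ ≤ _ := measure_mono hsub

lemma part3 {b : ℝ} (hb : b ∈ Set.Ioo (0:ℝ) 1) :
    Filter.Tendsto (fun x => Real.Gamma x * Real.Gamma b / Real.Gamma (x + b) - 1 / x)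
      Filter.atTop (nhds 0) := by
  have hF : Filter.Tendsto (fun x => F b 0 x) Filter.atTop (nhds 0) := by
    have key := MeasureTheory.tendsto_integral_filter_of_dominated_convergence
      (l := Filter.atTop) (μ := volume.restrict (Set.Ioo (0:ℝ) 1))
      (F := fun x (t : ℝ) => (Real.log t) ^ 0 * (t ^ (x - 1) * g b t))
      (f := fun _ : ℝ => (0:ℝ)) (bound := fun t => g b t)
      (Filter.Eventually.of_forall (fun y => measurable_core' 0))
      ?_ ?_ ?_
    · simpa [F] using key
    · filter_upwards [Filter.eventually_ge_atTop (1:ℝ)] with x hx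
      rw [ae_restrict_iff' measurableSet_Ioo]
      refine ae_of_all _ (fun t ht => ?_)
      have hgn := g_nonneg hb ht
      have h1 : t ^ (x - 1) ≤ 1 := Real.rpow_le_one ht.1.le ht.2.le (by linarith)
      have h2 : 0 ≤ t ^ (x - 1) := Real.rpow_nonneg ht.1.le _
      rw [pow_zero, one_mul, Real.norm_eq_abs, abs_of_nonneg (by positivity)]
      calc t ^ (x - 1) * g b t ≤ 1 * g b t := mul_le_mul_of_nonneg_right h1 hgn
        _ = g b t := one_mul _
    · refine (integrableF hb one_pos 0).congr ?_
      refine ae_of_all _ (fun t => ?_)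
      simp [Real.rpow_zero]
    · rw [ae_restrict_iff' measurableSet_Ioo]
      refine ae_of_all _ (fun t ht => ?_)
      simp only [pow_zero, one_mul]
      have h1 : Filter.Tendsto (fun x : ℝ => t ^ (x - 1)) Filter.atTop (nhds 0) := by
        have h2 : Filter.Tendsto (fun x : ℝ => x - 1) Filter.atTop Filter.atTop :=
          Filter.tendsto_atTop_add_const_right _ (-1) Filter.tendsto_id
        exact (tendsto_rpow_atTop_of_base_lt_one t (by linarith [ht.1]) ht.2).comp h2
      have := h1.mul_const (g b t)
      simpa using this
  refine hF.congr' ?_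
  filter_upwards [Filter.eventually_gt_atTop (0:ℝ)] with x hx
  exact (eqG hb hx).symm

lemma gamma_ne_neg_nat {c : ℝ} (hc : 0 < c) : ∀ m : ℕ, c ≠ -m := by
  intro m h
  have : (0:ℝ) ≤ m := Nat.cast_nonneg m
  rw [h] at hc; linarith

lemma digamma_eq {c : ℝ} (hc : 0 < c) : digamma c = deriv Real.Gamma c / Real.Gamma c := by
  have hΓ : 0 < Real.Gamma c := Real.Gamma_pos_of_pos hc
  have hd : HasDerivAt Real.Gamma (deriv Real.Gamma c) c :=
    (Real.differentiableAt_Gamma (gamma_ne_neg_nat hc)).hasDerivAt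
  have := hd.log hΓ.ne'
  exact this.deriv

lemma eulerGamma_eq : eulerGamma = -deriv Real.Gamma 1 := by
  rw [eulerGamma, digamma_eq one_pos, Real.Gamma_one, div_one]

lemma part4 {b : ℝ} (hb : b ∈ Set.Ioo (0:ℝ) 1) :
    Filter.Tendsto (fun x => Real.Gamma x * Real.Gamma b / Real.Gamma (x + b) - 1 / x)
      (nhdsWithin 0 (Set.Ioi 0)) (nhds (-eulerGamma - digamma b)) := by
  have hΓb : 0 < Real.Gamma b := Real.Gamma_pos_of_pos hb.1
  set f : ℝ → ℝ := fun x => Real.Gamma (x + 1) * Real.Gamma b / Real.Gamma (x + b) with hf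
  have hd1 : HasDerivAt (fun x : ℝ => Real.Gamma (x + 1)) (deriv Real.Gamma 1) 0 := by
    have h1 : HasDerivAt Real.Gamma (deriv Real.Gamma 1) ((0:ℝ) + 1) := by
      rw [zero_add]
      exact (Real.differentiableAt_Gamma (gamma_ne_neg_nat one_pos)).hasDerivAt
    have h2 : HasDerivAt (fun x : ℝ => x + 1) 1 0 := (hasDerivAt_id 0).add_const 1
    have h3 := h1.comp 0 h2; rw [mul_one] at h3; exact h3
  have hdb : HasDerivAt (fun x : ℝ => Real.Gamma (x + b)) (deriv Real.Gamma b) 0 := by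
    have h1 : HasDerivAt Real.Gamma (deriv Real.Gamma b) ((0:ℝ) + b) := by
      rw [zero_add]
      exact (Real.differentiableAt_Gamma (gamma_ne_neg_nat hb.1)).hasDerivAt
    have h2 : HasDerivAt (fun x : ℝ => x + b) 1 0 := (hasDerivAt_id 0).add_const b
    have h3 := h1.comp 0 h2; rw [mul_one] at h3; exact h3
  have hden : Real.Gamma ((0:ℝ) + b) ≠ 0 := by rw [zero_add]; exact hΓb.ne'
  have hdf : HasDerivAt f (deriv Real.Gamma 1 - deriv Real.Gamma b / Real.Gamma b) 0 := by
    have h := (hd1.mul_const (Real.Gamma b)).div hdb hden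
    have heq : (deriv Real.Gamma 1 * Real.Gamma b * Real.Gamma ((0:ℝ) + b)
        - Real.Gamma ((0:ℝ) + 1) * Real.Gamma b * deriv Real.Gamma b)
        / Real.Gamma ((0:ℝ) + b) ^ 2
        = deriv Real.Gamma 1 - deriv Real.Gamma b / Real.Gamma b := by
      rw [zero_add, zero_add, Real.Gamma_one]
      field_simp
    rw [← heq]
    exact h
  have hslope : Filter.Tendsto (slope f 0) (nhdsWithin 0 (Set.Ioi 0))
      (nhds (deriv Real.Gamma 1 - deriv Real.Gamma b / Real.Gamma b)) := by
    have := hasDerivAt_iff_tendsto_slope.mp hdf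
    exact this.mono_left (nhdsWithin_mono 0 (fun x hx => ne_of_gt hx))
  have hval : -eulerGamma - digamma b
      = deriv Real.Gamma 1 - deriv Real.Gamma b / Real.Gamma b := by
    rw [eulerGamma_eq, digamma_eq hb.1]; ring
  rw [hval]
  refine hslope.congr' ?_
  filter_upwards [self_mem_nhdsWithin] with x hx
  have hx0 : (0:ℝ) < x := hx
  have hΓxb : Real.Gamma (x + b) ≠ 0 := (Real.Gamma_pos_of_pos (by linarith [hb.1])).ne'
  have hΓx : Real.Gamma (x + 1) = x * Real.Gamma x := Real.Gamma_add_one hx0.ne'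
  have hf0 : f 0 = 1 := by
    rw [hf]; simp only [zero_add, Real.Gamma_one, one_mul]
    exact div_self hΓb.ne'
  rw [slope_def_field, hf0, hf]
  simp only
  rw [hΓx]
  field_simp
  have hx1 : x ≠ 0 := hx0.ne'
  field_simp
  ring

end Stmt11

theorem stmt_11 (b : ℝ) (hb : b ∈ Set.Ioo (0:ℝ) 1) :
    (∀ x > 0,
      Real.Gamma x * Real.Gamma b / Real.Gamma (x + b) - 1 / x
        = ∫ t in (0:ℝ)..1, t ^ (x - 1) * ((1 - t) ^ (b - 1) - 1)) ∧
    (∀ n : ℕ, ∀ x > 0,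
      0 < (-1) ^ n * iteratedDeriv n
        (fun y => Real.Gamma y * Real.Gamma b / Real.Gamma (y + b) - 1 / y) x) ∧
    Filter.Tendsto (fun x => Real.Gamma x * Real.Gamma b / Real.Gamma (x + b) - 1 / x)
      Filter.atTop (nhds 0) ∧
    Filter.Tendsto (fun x => Real.Gamma x * Real.Gamma b / Real.Gamma (x + b) - 1 / x)
      (nhdsWithin 0 (Set.Ioi 0)) (nhds (-eulerGamma - digamma b)) := by
  refine ⟨fun x hx => Stmt11.part1 hb hx, fun n x hx => ?_, Stmt11.part3 hb, Stmt11.part4 hb⟩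
  rw [Stmt11.iteratedG hb n x hx]
  exact Stmt11.part2 hb n hx
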